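/- For integers r,s,t,u with ru - st = ±1 and t ≠ 0, the abelianization of G = ⟨a₁, b₁, a₂ | a₁b₁a₁⁻¹ = b₁⁻¹, a₂² = a₁^{2r} b₁^s, a₂ a₁^{2t} b₁^u a₂⁻¹ = b₁^{-u} a₁^{-2t}⟩ is isomorphic to ℤ/(4t) ⊕ ℤ/2 ⊕ ℤ/2 if s is even, and to ℤ/(4t) ⊕ ℤ/4 if s is odd. -/

import Mathlib

/-- The defining relators of the fundamental group of the sapphire `K(r,s,t,u)`:
`a₁b₁a₁⁻¹ = b₁⁻¹`, `a₂² = a₁^{2r} b₁^s`, `a₂ a₁^{2t} b₁^u a₂⁻¹ = b₁^{-u} a₁^{-2t}`. -/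
def sapphireRels (r s t u : ℤ) : Set (FreeGroup (Fin 3)) :=
  {FreeGroup.of 0 * FreeGroup.of 1 * (FreeGroup.of 0)⁻¹ * FreeGroup.of 1,
   (FreeGroup.of 2) ^ 2 * ((FreeGroup.of 0) ^ (2 * r) * (FreeGroup.of 1) ^ s)⁻¹,
   FreeGroup.of 2 * (FreeGroup.of 0) ^ (2 * t) * (FreeGroup.of 1) ^ u * (FreeGroup.of 2)⁻¹ *
     ((FreeGroup.of 1) ^ (-u) * (FreeGroup.of 0) ^ (-(2 * t)))⁻¹}

namespace Sapph

variable (r s t u : ℤ)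

abbrev G (r s t u : ℤ) := PresentedGroup (sapphireRels r s t u)
abbrev A (r s t u : ℤ) := Additive (Abelianization (G r s t u))

def μ : FreeGroup (Fin 3) →* Abelianization (G r s t u) :=
  (Abelianization.of).comp (PresentedGroup.mk _)

def a : A r s t u := Additive.ofMul (μ r s t u (FreeGroup.of 0))
def b : A r s t u := Additive.ofMul (μ r s t u (FreeGroup.of 1))
def c : A r s t u := Additive.ofMul (μ r s t u (FreeGroup.of 2))

theorem mu_rel (w : FreeGroup (Fin 3)) (hw : w ∈ sapphireRels r s t u) :
    μ r s t u w = 1 := by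
  have : PresentedGroup.mk (sapphireRels r s t u) w = 1 :=
    (QuotientGroup.eq_one_iff _).2 (Subgroup.subset_normalClosure hw)
  simp [μ, this]

theorem rel1 : (2:ℤ) • b r s t u = 0 := by
  have h := mu_rel r s t u _ (Set.mem_insert _ _)
  have h2 : a r s t u + b r s t u + -(a r s t u) + b r s t u = 0 := by
    have := congrArg Additive.ofMul h
    simpa [a, b, ofMul_mul, ofMul_inv] using this
  linear_combination (norm := module) h2

theorem rel2 : (2:ℤ) • c r s t u = (2*r) • a r s t u + s • b r s t u := by
  have h := mu_rel r s t u _ (Set.mem_insert_of_mem _ (Set.mem_insert _ _))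
  have h2 : (2:ℕ) • c r s t u + -((2*r) • a r s t u + s • b r s t u) = 0 := by
    have := congrArg Additive.ofMul h
    simpa [a, b, c, ofMul_mul, ofMul_inv, ofMul_pow, ofMul_zpow] using this
  linear_combination (norm := module) h2

theorem rel3 : (4*t) • a r s t u + (2*u) • b r s t u = 0 := by
  have h := mu_rel r s t u _
    (Set.mem_insert_of_mem _ (Set.mem_insert_of_mem _ rfl))
  have h2 : c r s t u + (2*t) • a r s t u + u • b r s t u + -(c r s t u)
      + -(-u • b r s t u + -(2*t) • a r s t u) = 0 := by
    have := congrArg Additive.ofMul h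
    simpa [a, b, c, ofMul_mul, ofMul_inv, ofMul_zpow] using this
  linear_combination (norm := module) h2

theorem h4t : (4*t) • a r s t u = 0 := by
  linear_combination (norm := module) rel3 r s t u - u • rel1 r s t u

theorem hna : (((4*t).natAbs : ℤ)) • a r s t u = 0 := by
  rcases Int.natAbs_eq (4*t) with he | he
  · rw [← he]; exact h4t r s t u
  · rw [(by omega : (((4*t).natAbs : ℤ)) = -(4*t)), neg_smul, h4t, neg_zero]

theorem evenCase (k : ℤ) (hk : s = k + k) :
    Nonempty (Abelianization (PresentedGroup (sapphireRels r s t u)) ≃*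
      Multiplicative (ZMod (4 * t).natAbs × ZMod 2 × ZMod 2)) := by
  subst hk
  set n := (4 * t).natAbs with hn
  set δ : A r (k+k) t u := c r (k+k) t u - r • a r (k+k) t u - k • b r (k+k) t u with hδdef
  have hδ : (2:ℤ) • δ = 0 := by
    rw [hδdef]
    linear_combination (norm := module) rel2 r (k+k) t u
  -- forward map on generators
  set f : Fin 3 → Multiplicative (ZMod n × ZMod 2 × ZMod 2) := fun i =>
    Multiplicative.ofAdd (match i with
    | 0 => ((1 : ZMod n), (0 : ZMod 2), (0 : ZMod 2))
    | 1 => (0, 1, 0)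
    | 2 => ((r : ZMod n), (k : ZMod 2), 1)) with hfdef
  have hzn : ((t : ℤ) : ZMod n) * 4 = 0 := by
    have : ((4 * t : ℤ) : ZMod n) = 0 := by
      rw [ZMod.intCast_zmod_eq_zero_iff_dvd]
      exact Int.natAbs_dvd.mpr dvd_rfl
    push_cast at this
    linear_combination this
  have hz2 : (2 : ZMod 2) = 0 := by decide
  have hf : ∀ w ∈ sapphireRels r (k+k) t u, FreeGroup.lift f w = 1 := by
    intro w hw
    simp only [sapphireRels, Set.mem_insert_iff, Set.mem_singleton_iff] at hw
    rcases hw with rfl | rfl | rfl <;>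
    · apply Multiplicative.toAdd.injective
      simp only [map_mul, map_zpow, map_inv, FreeGroup.lift_apply_of, hfdef, toAdd_mul, toAdd_zpow,
        map_pow, toAdd_pow, toAdd_inv, toAdd_ofAdd, toAdd_one, Prod.smul_mk, Prod.mk_add_mk,
        Prod.neg_mk, Prod.mk_eq_zero, smul_zero, zsmul_eq_mul, nsmul_eq_mul]
      refine ⟨?_, ?_, ?_⟩ <;> push_cast <;>
        first
          | ring1
          | linear_combination hzn
          | linear_combination hz2
          | linear_combination ((u : ZMod 2)) * hz2
          | linear_combination ((k : ZMod 2)) * hz2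
  let Φ : Abelianization (G r (k+k) t u) →* Multiplicative (ZMod n × ZMod 2 × ZMod 2) :=
    Abelianization.lift (PresentedGroup.toGroup hf)
  let fx : ZMod n →+ A r (k+k) t u := ZMod.lift n ⟨zmultiplesHom _ (a r (k+k) t u), by
    show ((n:ℕ):ℤ) • a r (k+k) t u = 0
    exact hna r (k+k) t u⟩
  let fy : ZMod 2 →+ A r (k+k) t u := ZMod.lift 2 ⟨zmultiplesHom _ (b r (k+k) t u), by
    show (((2:ℕ):ℤ)) • b r (k+k) t u = 0
    push_cast
    exact rel1 r (k+k) t u⟩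
  let fz : ZMod 2 →+ A r (k+k) t u := ZMod.lift 2 ⟨zmultiplesHom _ δ, by
    show (((2:ℕ):ℤ)) • δ = 0
    push_cast
    exact hδ⟩
  let ψ : (ZMod n × ZMod 2 × ZMod 2) →+ A r (k+k) t u := fx.coprod (fy.coprod fz)
  let Ψ : Multiplicative (ZMod n × ZMod 2 × ZMod 2) →* Abelianization (G r (k+k) t u) :=
    AddMonoidHom.toMultiplicativeLeft ψ
  have key : ∀ v, Ψ (Multiplicative.ofAdd v) = Additive.toMul (ψ v) := fun v => rfl
  have hψ : ∀ (x y z : ℤ), ψ ((x : ZMod n), (y : ZMod 2), (z : ZMod 2))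
      = x • a r (k+k) t u + (y • b r (k+k) t u + z • δ) := by
    intro x y z
    simp only [ψ, AddMonoidHom.coprod_apply, fx, fy, fz, ZMod.lift_coe, zmultiplesHom_apply]
  have hf0 : f 0 = Multiplicative.ofAdd (((1:ℤ) : ZMod n), ((0:ℤ) : ZMod 2), ((0:ℤ) : ZMod 2)) := by
    simp [hfdef]
  have hf1 : f 1 = Multiplicative.ofAdd (((0:ℤ) : ZMod n), ((1:ℤ) : ZMod 2), ((0:ℤ) : ZMod 2)) := by
    simp [hfdef]
  have hf2 : f 2 = Multiplicative.ofAdd (((r:ℤ) : ZMod n), ((k:ℤ) : ZMod 2), ((1:ℤ) : ZMod 2)) := by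
    simp [hfdef]
  have hΦ0 : Φ (Additive.toMul (a r (k+k) t u)) = f 0 := by
    show Φ (Abelianization.of (PresentedGroup.of 0)) = f 0
    simp [Φ, Abelianization.lift_apply_of, PresentedGroup.toGroup.of]
  have hΦ1 : Φ (Additive.toMul (b r (k+k) t u)) = f 1 := by
    show Φ (Abelianization.of (PresentedGroup.of 1)) = f 1
    simp [Φ, Abelianization.lift_apply_of, PresentedGroup.toGroup.of]
  have hΦ2 : Φ (Additive.toMul (c r (k+k) t u)) = f 2 := by
    show Φ (Abelianization.of (PresentedGroup.of 2)) = f 2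
    simp [Φ, Abelianization.lift_apply_of, PresentedGroup.toGroup.of]
  refine ⟨MonoidHom.toMulEquiv Φ Ψ ?_ ?_⟩
  · apply Abelianization.hom_ext
    apply PresentedGroup.ext
    intro i
    simp only [MonoidHom.comp_apply, MonoidHom.id_apply, Abelianization.lift_apply_of,
      PresentedGroup.toGroup.of]
    fin_cases i
    · show Ψ (Φ (Abelianization.of (PresentedGroup.of 0))) = Abelianization.of (PresentedGroup.of 0)
      rw [show Abelianization.of (PresentedGroup.of (0 : Fin 3))
          = Additive.toMul (a r (k+k) t u) from rfl, hΦ0, hf0, key, hψ]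
      refine congrArg Additive.toMul ?_
      module
    · show Ψ (Φ (Abelianization.of (PresentedGroup.of 1))) = Abelianization.of (PresentedGroup.of 1)
      rw [show Abelianization.of (PresentedGroup.of (1 : Fin 3))
          = Additive.toMul (b r (k+k) t u) from rfl, hΦ1, hf1, key, hψ]
      refine congrArg Additive.toMul ?_
      module
    · show Ψ (Φ (Abelianization.of (PresentedGroup.of 2))) = Abelianization.of (PresentedGroup.of 2)
      rw [show Abelianization.of (PresentedGroup.of (2 : Fin 3))
          = Additive.toMul (c r (k+k) t u) from rfl, hΦ2, hf2, key, hψ, hδdef]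
      refine congrArg Additive.toMul ?_
      module
  · apply MonoidHom.ext
    intro m
    obtain ⟨⟨p, q, w⟩, rfl⟩ : ∃ v, Multiplicative.ofAdd v = m := ⟨Multiplicative.toAdd m, rfl⟩
    obtain ⟨x, rfl⟩ := ZMod.intCast_surjective p
    obtain ⟨y, rfl⟩ := ZMod.intCast_surjective q
    obtain ⟨z, rfl⟩ := ZMod.intCast_surjective w
    simp only [MonoidHom.comp_apply, MonoidHom.id_apply]
    rw [key, hψ]
    rw [toMul_add, toMul_add, toMul_zsmul, toMul_zsmul, toMul_zsmul, hδdef,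
      toMul_sub, toMul_sub, toMul_zsmul, toMul_zsmul]
    rw [map_mul, map_mul, map_zpow, map_zpow, map_zpow, map_div, map_div, map_zpow, map_zpow,
      hΦ0, hΦ1, hΦ2, hf0, hf1, hf2]
    apply Multiplicative.toAdd.injective
    simp only [toAdd_mul, toAdd_div, toAdd_zpow, toAdd_ofAdd, Prod.smul_mk, Prod.mk_add_mk,
      Prod.mk_sub_mk, zsmul_eq_mul]
    simp only [Prod.mk.injEq]
    refine ⟨?_, ?_, ?_⟩ <;> push_cast <;> ring1

theorem oddCase (m : ℤ) (hk : s = 2 * m + 1) :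
    Nonempty (Abelianization (PresentedGroup (sapphireRels r s t u)) ≃*
      Multiplicative (ZMod (4 * t).natAbs × ZMod 4)) := by
  subst hk
  set n := (4 * t).natAbs with hn
  set δ : A r (2*m+1) t u := c r (2*m+1) t u - r • a r (2*m+1) t u with hδdef
  have hδ : (4:ℤ) • δ = 0 := by
    rw [hδdef]
    linear_combination (norm := module) (2:ℤ) • rel2 r (2*m+1) t u + (2*m+1) • rel1 r (2*m+1) t u
  set f : Fin 3 → Multiplicative (ZMod n × ZMod 4) := fun i =>
    Multiplicative.ofAdd (match i with
    | 0 => ((1 : ZMod n), (0 : ZMod 4))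
    | 1 => (0, 2)
    | 2 => ((r : ZMod n), (1 : ZMod 4))) with hfdef
  have hzn : ((t : ℤ) : ZMod n) * 4 = 0 := by
    have : ((4 * t : ℤ) : ZMod n) = 0 := by
      rw [ZMod.intCast_zmod_eq_zero_iff_dvd]
      exact Int.natAbs_dvd.mpr dvd_rfl
    push_cast at this
    linear_combination this
  have hz4 : (4 : ZMod 4) = 0 := by decide
  have hf : ∀ w ∈ sapphireRels r (2*m+1) t u, FreeGroup.lift f w = 1 := by
    intro w hw
    simp only [sapphireRels, Set.mem_insert_iff, Set.mem_singleton_iff] at hw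
    rcases hw with rfl | rfl | rfl <;>
    · apply Multiplicative.toAdd.injective
      simp only [map_mul, map_zpow, map_inv, FreeGroup.lift_apply_of, hfdef, toAdd_mul, toAdd_zpow,
        map_pow, toAdd_pow, toAdd_inv, toAdd_ofAdd, toAdd_one, Prod.smul_mk, Prod.mk_add_mk,
        Prod.neg_mk, Prod.mk_eq_zero, smul_zero, zsmul_eq_mul, nsmul_eq_mul]
      refine ⟨?_, ?_⟩ <;> push_cast <;>
        first
          | ring1
          | linear_combination hzn
          | linear_combination hz4
          | linear_combination ((u : ZMod 4)) * hz4
          | linear_combination ((m : ZMod 4)) * hz4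
          | linear_combination (-(m : ZMod 4)) * hz4
  let Φ : Abelianization (G r (2*m+1) t u) →* Multiplicative (ZMod n × ZMod 4) :=
    Abelianization.lift (PresentedGroup.toGroup hf)
  let fx : ZMod n →+ A r (2*m+1) t u := ZMod.lift n ⟨zmultiplesHom _ (a r (2*m+1) t u), by
    show ((n:ℕ):ℤ) • a r (2*m+1) t u = 0
    exact hna r (2*m+1) t u⟩
  let fz : ZMod 4 →+ A r (2*m+1) t u := ZMod.lift 4 ⟨zmultiplesHom _ δ, by
    show (((4:ℕ):ℤ)) • δ = 0
    push_cast
    exact hδ⟩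
  let ψ : (ZMod n × ZMod 4) →+ A r (2*m+1) t u := fx.coprod fz
  let Ψ : Multiplicative (ZMod n × ZMod 4) →* Abelianization (G r (2*m+1) t u) :=
    AddMonoidHom.toMultiplicativeLeft ψ
  have key : ∀ v, Ψ (Multiplicative.ofAdd v) = Additive.toMul (ψ v) := fun v => rfl
  have hψ : ∀ (x y : ℤ), ψ ((x : ZMod n), (y : ZMod 4))
      = x • a r (2*m+1) t u + y • δ := by
    intro x y
    simp only [ψ, AddMonoidHom.coprod_apply, fx, fz, ZMod.lift_coe, zmultiplesHom_apply]
  have hf0 : f 0 = Multiplicative.ofAdd (((1:ℤ) : ZMod n), ((0:ℤ) : ZMod 4)) := by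
    simp [hfdef]
  have hf1 : f 1 = Multiplicative.ofAdd (((0:ℤ) : ZMod n), ((2:ℤ) : ZMod 4)) := by
    simp [hfdef]
  have hf2 : f 2 = Multiplicative.ofAdd (((r:ℤ) : ZMod n), ((1:ℤ) : ZMod 4)) := by
    simp [hfdef]
  have hΦ0 : Φ (Additive.toMul (a r (2*m+1) t u)) = f 0 := by
    show Φ (Abelianization.of (PresentedGroup.of 0)) = f 0
    simp [Φ, Abelianization.lift_apply_of, PresentedGroup.toGroup.of]
  have hΦ1 : Φ (Additive.toMul (b r (2*m+1) t u)) = f 1 := by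
    show Φ (Abelianization.of (PresentedGroup.of 1)) = f 1
    simp [Φ, Abelianization.lift_apply_of, PresentedGroup.toGroup.of]
  have hΦ2 : Φ (Additive.toMul (c r (2*m+1) t u)) = f 2 := by
    show Φ (Abelianization.of (PresentedGroup.of 2)) = f 2
    simp [Φ, Abelianization.lift_apply_of, PresentedGroup.toGroup.of]
  refine ⟨MonoidHom.toMulEquiv Φ Ψ ?_ ?_⟩
  · apply Abelianization.hom_ext
    apply PresentedGroup.ext
    intro i
    simp only [MonoidHom.comp_apply, MonoidHom.id_apply, Abelianization.lift_apply_of,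
      PresentedGroup.toGroup.of]
    fin_cases i
    · show Ψ (Φ (Abelianization.of (PresentedGroup.of 0))) = Abelianization.of (PresentedGroup.of 0)
      rw [show Abelianization.of (PresentedGroup.of (0 : Fin 3))
          = Additive.toMul (a r (2*m+1) t u) from rfl, hΦ0, hf0, key, hψ]
      refine congrArg Additive.toMul ?_
      module
    · show Ψ (Φ (Abelianization.of (PresentedGroup.of 1))) = Abelianization.of (PresentedGroup.of 1)
      rw [show Abelianization.of (PresentedGroup.of (1 : Fin 3))
          = Additive.toMul (b r (2*m+1) t u) from rfl, hΦ1, hf1, key, hψ, hδdef]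
      refine congrArg Additive.toMul ?_
      linear_combination (norm := module) rel2 r (2*m+1) t u + m • rel1 r (2*m+1) t u
    · show Ψ (Φ (Abelianization.of (PresentedGroup.of 2))) = Abelianization.of (PresentedGroup.of 2)
      rw [show Abelianization.of (PresentedGroup.of (2 : Fin 3))
          = Additive.toMul (c r (2*m+1) t u) from rfl, hΦ2, hf2, key, hψ, hδdef]
      refine congrArg Additive.toMul ?_
      module
  · apply MonoidHom.ext
    intro mm
    obtain ⟨⟨p, q⟩, rfl⟩ : ∃ v, Multiplicative.ofAdd v = mm := ⟨Multiplicative.toAdd mm, rfl⟩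
    obtain ⟨x, rfl⟩ := ZMod.intCast_surjective p
    obtain ⟨y, rfl⟩ := ZMod.intCast_surjective q
    simp only [MonoidHom.comp_apply, MonoidHom.id_apply]
    rw [key, hψ]
    rw [toMul_add, toMul_zsmul, toMul_zsmul, hδdef, toMul_sub, toMul_zsmul]
    rw [map_mul, map_zpow, map_zpow, map_div, map_zpow, hΦ0, hΦ2, hf0, hf2]
    apply Multiplicative.toAdd.injective
    simp only [toAdd_mul, toAdd_div, toAdd_zpow, toAdd_ofAdd, Prod.smul_mk, Prod.mk_add_mk,
      Prod.mk_sub_mk, zsmul_eq_mul]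
    simp only [Prod.mk.injEq]
    refine ⟨?_, ?_⟩ <;> push_cast <;> ring1

end Sapph

theorem stmt_11 (r s t u : ℤ) (h : r * u - s * t = 1 ∨ r * u - s * t = -1) (ht : t ≠ 0) :
    (Even s →
      Nonempty (Abelianization (PresentedGroup (sapphireRels r s t u)) ≃*
        Multiplicative (ZMod (4 * t).natAbs × ZMod 2 × ZMod 2))) ∧
    (Odd s →
      Nonempty (Abelianization (PresentedGroup (sapphireRels r s t u)) ≃*
        Multiplicative (ZMod (4 * t).natAbs × ZMod 4))) := by
  constructor
  · rintro ⟨k, hk⟩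
    exact Sapph.evenCase r s t u k hk
  · rintro ⟨m, hm⟩
    exact Sapph.oddCase r s t u m hm
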